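/- If λ ∈ A (the set of regularization factors for which the ERM-f-divergence-regularized problem has a solution), then every λ' > λ also belongs to A; that is, A is an interval unbounded above, of the form [λ*, ∞) or (λ*, ∞) with λ* = inf A. -/

import Mathlib

open MeasureTheory Set

private lemma key_ivt {M : Type*} [MeasurableSpace M] (Q : Measure M) [IsProbabilityMeasure Q]
    (L : M → ℝ) (hLm : Measurable L) (hL0 : ∀ θ, 0 ≤ L θ)
    (finv : ℝ → ℝ) (hfc : Continuous finv) (hfm : Monotone finv)
    (lam' : ℝ) (hl : 0 < lam') (a b : ℝ) (hab : a ≤ b)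
    (hb0 : ∀ᵐ θ ∂Q, 0 ≤ finv (-(b + L θ) / lam'))
    (ha1 : 1 ≤ ∫ θ, finv (-(a + L θ) / lam') ∂Q)
    (hb1 : ∫ θ, finv (-(b + L θ) / lam') ∂Q ≤ 1) :
    ∃ β ∈ Icc a b, ∫ θ, finv (-(β + L θ) / lam') ∂Q = 1 := by
  set F : ℝ → M → ℝ := fun β θ => finv (-(max a (min β b) + L θ) / lam') with hF
  have hmeas : ∀ β : ℝ, AEStronglyMeasurable (F β) Q := fun β =>
    (hfc.measurable.comp ((hLm.const_add _).neg.div_const _)).aestronglyMeasurable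
  have hbd : ∀ β : ℝ, ∀ᵐ θ ∂Q, ‖F β θ‖ ≤ |finv (-a / lam')| := by
    intro β
    filter_upwards [hb0] with θ hθ
    have h1 : a ≤ max a (min β b) := le_max_left _ _
    have h2 : max a (min β b) ≤ b := max_le hab (min_le_right _ _)
    have hFb : finv (-(b + L θ) / lam') ≤ F β θ := hfm (by gcongr)
    have hFa : F β θ ≤ finv (-(a + L θ) / lam') := hfm (by gcongr)
    have hCa : finv (-(a + L θ) / lam') ≤ finv (-a / lam') := by
      have := hL0 θ
      exact hfm (by gcongr; linarith)
    have h0 : 0 ≤ F β θ := le_trans hθ hFb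
    rw [Real.norm_eq_abs, abs_of_nonneg h0]
    exact le_trans (le_trans hFa hCa) (le_abs_self _)
  have hcontF : ∀ᵐ θ ∂Q, Continuous fun β => F β θ := by
    refine Filter.Eventually.of_forall fun θ => ?_
    exact hfc.comp
      ((((continuous_const.max (continuous_id.min continuous_const)).add continuous_const).neg).div_const _)
  have hgc : Continuous fun β => ∫ θ, F β θ ∂Q :=
    continuous_of_dominated hmeas hbd (integrable_const _) hcontF
  have hga : (∫ θ, F a θ ∂Q) = ∫ θ, finv (-(a + L θ) / lam') ∂Q := by
    simp [hF, min_eq_left hab]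
  have hgb : (∫ θ, F b θ ∂Q) = ∫ θ, finv (-(b + L θ) / lam') ∂Q := by
    simp [hF, max_eq_right hab]
  have h1mem : (1:ℝ) ∈ Icc (∫ θ, F b θ ∂Q) (∫ θ, F a θ ∂Q) := by
    rw [hga, hgb]; exact ⟨hb1, ha1⟩
  obtain ⟨β, hβmem, hβ1⟩ := intermediate_value_Icc' hab hgc.continuousOn h1mem
  refine ⟨β, hβmem, ?_⟩
  have hproj : max a (min β b) = β := by
    rw [min_eq_left hβmem.2, max_eq_right hβmem.1]
  simpa [hF, hproj] using hβ1

private lemma upward_step {M : Type*} [MeasurableSpace M] (Q : Measure M) [IsProbabilityMeasure Q]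
    (L : M → ℝ) (hLm : Measurable L) (hL0 : ∀ θ, 0 ≤ L θ)
    (f finv : ℝ → ℝ)
    (hmono : StrictMono finv) (hcont : Continuous finv)
    (hinv : ∀ x : ℝ, 0 < x → finv (deriv f x) = x)
    (lam lam' : ℝ) (hlam0 : 0 < lam) (hlt : lam < lam')
    (β : ℝ) (hpos : ∀ᵐ θ ∂Q, 0 < finv (-(β + L θ) / lam))
    (hint : ∫ θ, finv (-(β + L θ) / lam) ∂Q = 1) :
    ∃ β' : ℝ, (∀ᵐ θ ∂Q, 0 < finv (-(β' + L θ) / lam')) ∧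
      ∫ θ, finv (-(β' + L θ) / lam') ∂Q = 1 := by
  have hl'0 : 0 < lam' := hlam0.trans hlt
  have hfm : Monotone finv := hmono.monotone
  -- integrability of the original integrand
  have hintg : Integrable (fun θ => finv (-(β + L θ) / lam)) Q := by
    by_contra h
    rw [integral_undef h] at hint
    norm_num at hint
  have hmeas' : ∀ c d : ℝ, AEStronglyMeasurable (fun θ => finv (-(c + L θ) / d)) Q := fun c d =>
    (hcont.measurable.comp ((hLm.const_add _).neg.div_const _)).aestronglyMeasurable
  -- the lower endpoint a
  set a : ℝ := lam' * β / lam with ha_def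
  have harga : ∀ θ, -(β + L θ) / lam ≤ -(a + L θ) / lam' := by
    intro θ
    have hL := hL0 θ
    rw [div_le_div_iff₀ hlam0 hl'0, ha_def]
    have : lam' * β / lam * lam = lam' * β := by field_simp
    nlinarith [this]
  have hposa : ∀ᵐ θ ∂Q, 0 < finv (-(a + L θ) / lam') := by
    filter_upwards [hpos] with θ hθ
    exact lt_of_lt_of_le hθ (hfm (harga θ))
  have hCa : ∀ θ, finv (-(a + L θ) / lam') ≤ finv (-β / lam) := by
    intro θ
    have hL := hL0 θ
    apply hfm
    rw [div_le_div_iff₀ hl'0 hlam0, ha_def]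
    have : lam' * β / lam * lam = lam' * β := by field_simp
    nlinarith [this]
  have hintga : Integrable (fun θ => finv (-(a + L θ) / lam')) Q := by
    refine Integrable.mono' (integrable_const (|finv (-β / lam)|)) (hmeas' a lam') ?_
    filter_upwards [hposa] with θ hθ
    rw [Real.norm_eq_abs, abs_of_pos hθ]
    exact le_trans (hCa θ) (le_abs_self _)
  have ha1 : 1 ≤ ∫ θ, finv (-(a + L θ) / lam') ∂Q := by
    rw [← hint]
    exact integral_mono_ae hintg hintga (Filter.Eventually.of_forall fun θ => hfm (harga θ))
  by_cases hS : ∃ x, finv x ≤ 0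
  · -- finv attains nonpositive values: crossing point x₀
    obtain ⟨x₁, hx₁⟩ := hS
    set S : Set ℝ := {x | finv x ≤ 0} with hS_def
    have hSne : S.Nonempty := ⟨x₁, hx₁⟩
    have hSbdd : BddAbove S := by
      refine ⟨deriv f 1, fun x hx => ?_⟩
      have h1 : finv (deriv f 1) = 1 := hinv 1 one_pos
      have hx' : finv x ≤ 0 := hx
      have : finv x < finv (deriv f 1) := by rw [h1]; linarith
      exact le_of_lt (hmono.lt_iff_lt.mp this)
    have hScl : IsClosed S := isClosed_le hcont continuous_const
    set x₀ : ℝ := sSup S with hx₀_def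
    have hx₀S : x₀ ∈ S := hScl.csSup_mem hSne hSbdd
    have pos_iff : ∀ x : ℝ, 0 < finv x ↔ x₀ < x := by
      intro x
      constructor
      · intro hx
        by_contra h
        push_neg at h
        have : finv x ≤ finv x₀ := hfm h
        have : finv x ≤ 0 := le_trans this hx₀S
        linarith
      · intro hx
        by_contra h
        push_neg at h
        exact absurd (le_csSup hSbdd h) (not_le.mpr hx)
    -- a.e. bound on L
    have hLK : ∀ᵐ θ ∂Q, L θ < -β - lam * x₀ := by
      filter_upwards [hpos] with θ hθ
      have := (pos_iff _).mp hθ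
      rw [lt_div_iff₀ hlam0] at this
      linarith
    -- β / lam < -x₀
    have hβx : β < -(lam * x₀) := by
      have hne : (Filter.NeBot (ae Q)) := ae_neBot.mpr (IsProbabilityMeasure.ne_zero Q)
      obtain ⟨θ, hθ⟩ := hLK.exists
      have := hL0 θ
      linarith
    set b : ℝ := β - (lam' - lam) * x₀ with hb_def
    have hab : a ≤ b := by
      rw [ha_def, hb_def, div_le_iff₀ hlam0]
      nlinarith [sub_pos.mpr hlt]
    have hposb : ∀ᵐ θ ∂Q, 0 < finv (-(b + L θ) / lam') := by
      filter_upwards [hLK] with θ hθ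
      rw [pos_iff, lt_div_iff₀ hl'0, hb_def]
      nlinarith [sub_pos.mpr hlt]
    have hargb : ∀ᵐ θ ∂Q, finv (-(b + L θ) / lam') ≤ finv (-(β + L θ) / lam) := by
      filter_upwards [hLK] with θ hθ
      apply hfm
      rw [div_le_div_iff₀ hl'0 hlam0, hb_def]
      have h1 : (L θ + β + lam * x₀) * (lam' - lam) < 0 :=
        mul_neg_of_neg_of_pos (by linarith) (by linarith)
      nlinarith [h1]
    have hintgb : Integrable (fun θ => finv (-(b + L θ) / lam')) Q := by
      refine Integrable.mono hintg (hmeas' b lam') ?_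
      filter_upwards [hargb, hposb, hpos] with θ h1 h2 h3
      rw [Real.norm_eq_abs, Real.norm_eq_abs, abs_of_pos h2, abs_of_pos h3]
      exact h1
    have hb1 : ∫ θ, finv (-(b + L θ) / lam') ∂Q ≤ 1 := by
      rw [← hint]
      exact integral_mono_ae hintgb hintg hargb
    obtain ⟨β', hβ'mem, hβ'int⟩ := key_ivt Q L hLm hL0 finv hcont hfm lam' hl'0 a b hab
      (by filter_upwards [hposb] with θ h; exact le_of_lt h) ha1 hb1
    refine ⟨β', ?_, hβ'int⟩
    filter_upwards [hposb] with θ hθ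
    refine lt_of_lt_of_le hθ (hfm ?_)
    have hb2 := hβ'mem.2
    gcongr
  · -- finv is everywhere positive
    push_neg at hS
    set t : ℝ := deriv f (1/4) with ht_def
    have hft : finv t = 1/4 := hinv _ (by norm_num)
    set b : ℝ := max a (-(lam' * t)) with hb_def
    have hab : a ≤ b := le_max_left _ _
    have hbub : ∀ θ, finv (-(b + L θ) / lam') ≤ 1 / 4 := by
      intro θ
      have hL := hL0 θ
      have hbt : -(lam' * t) ≤ b := le_max_right _ _
      rw [← hft]
      apply hfm
      rw [div_le_iff₀ hl'0]
      nlinarith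
    have hintgb : Integrable (fun θ => finv (-(b + L θ) / lam')) Q := by
      refine Integrable.mono' (integrable_const ((1:ℝ)/4)) (hmeas' b lam') ?_
      refine Filter.Eventually.of_forall fun θ => ?_
      rw [Real.norm_eq_abs, abs_of_pos (hS _)]
      exact hbub θ
    have hb1 : ∫ θ, finv (-(b + L θ) / lam') ∂Q ≤ 1 := by
      have : ∫ θ, finv (-(b + L θ) / lam') ∂Q ≤ ∫ _, (1:ℝ)/4 ∂Q :=
        integral_mono hintgb (integrable_const _) hbub
      simp only [integral_const, measure_univ, ENNReal.toReal_one, probReal_univ, one_smul] at this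
      linarith
    obtain ⟨β', hβ'mem, hβ'int⟩ := key_ivt Q L hLm hL0 finv hcont hfm lam' hl'0 a b hab
      (Filter.Eventually.of_forall fun θ => le_of_lt (hS _)) ha1 hb1
    exact ⟨β', Filter.Eventually.of_forall fun θ => hS _, hβ'int⟩

theorem admissible_regularization_upward_closed
    {M : Type*} [MeasurableSpace M] (Q : Measure M) [IsProbabilityMeasure Q]
    (L : M → ℝ) (hLm : Measurable L) (hL0 : ∀ θ, 0 ≤ L θ)
    (f finv : ℝ → ℝ)
    (hconv : StrictConvexOn ℝ (Ici 0) f)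
    (hdiff : DifferentiableOn ℝ f (Ioi 0))
    (hmono : StrictMono finv) (hcont : Continuous finv)
    (hinv : ∀ x : ℝ, 0 < x → finv (deriv f x) = x)
    (A : Set ℝ)
    (hAdef : A = {lam : ℝ | 0 < lam ∧ ∃ β : ℝ,
      (∀ᵐ θ ∂Q, 0 < finv (-(β + L θ) / lam)) ∧
      ∫ θ, finv (-(β + L θ) / lam) ∂Q = 1}) :
    (∀ lam ∈ A, ∀ lam' : ℝ, lam < lam' → lam' ∈ A) ∧
    (A.Nonempty → A = Ici (sInf A) ∨ A = Ioi (sInf A)) := by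
  have hup : ∀ lam ∈ A, ∀ lam' : ℝ, lam < lam' → lam' ∈ A := by
    intro lam hlam lam' hlt
    rw [hAdef] at hlam ⊢
    obtain ⟨hlam0, β, hpos, hint⟩ := hlam
    obtain ⟨β', hpos', hint'⟩ :=
      upward_step Q L hLm hL0 f finv hmono hcont hinv lam lam' hlam0 hlt β hpos hint
    exact ⟨hlam0.trans hlt, β', hpos', hint'⟩
  refine ⟨hup, fun hne => ?_⟩
  have hbdd : BddBelow A := by
    refine ⟨0, fun x hx => ?_⟩
    rw [hAdef] at hx
    exact le_of_lt hx.1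
  by_cases hm : sInf A ∈ A
  · left
    ext x
    simp only [mem_Ici]
    constructor
    · exact fun hx => csInf_le hbdd hx
    · intro hx
      rcases eq_or_lt_of_le hx with h | h
      · rwa [← h]
      · exact hup _ hm _ h
  · right
    ext x
    simp only [mem_Ioi]
    constructor
    · intro hx
      exact lt_of_le_of_ne (csInf_le hbdd hx) (fun h => hm (h ▸ hx))
    · intro hx
      obtain ⟨y, hy, hyx⟩ := exists_lt_of_csInf_lt hne hx
      exact hup _ hy _ hyx
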